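/- Let K be a permutation group on a finite set Δ and L a transitive permutation group on a finite set Σ. If K has at least |Σ| regular sets on Δ of pairwise distinct cardinalities, then the imprimitive wreath product K ≀ L has a regular set on Δ × Σ. -/

import Mathlib

open Pointwise MulAction

/-- The invariance group `G(R)` of an unordered relation `R` on `Ω`:
all permutations `g` such that `x ∈ R` implies `g • x ∈ R`. -/
def invGroup {Ω : Type*} [Fintype Ω] [DecidableEq Ω] (R : Set (Finset Ω)) :
    Subgroup (Equiv.Perm Ω) where
  carrier := {g | ∀ x ∈ R, g • x ∈ R}
  one_mem' := fun x hx => by simpa using hx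
  mul_mem' := fun ha hb x hx => by rw [mul_smul]; exact ha _ (hb _ hx)
  inv_mem' := by
    intro g hg x hx
    have himg : (fun y : Finset _ => g • y) '' R ⊆ R := by
      rintro - ⟨y, hy, rfl⟩; exact hg y hy
    have heq : (fun y : Finset _ => g • y) '' R = R := by
      apply Set.eq_of_subset_of_ncard_le himg _ (Set.toFinite R)
      rw [Set.ncard_image_of_injective _ (MulAction.injective g)]
    rw [← heq] at hx
    obtain ⟨y, hy, hxy⟩ := hx
    have : g⁻¹ • x = y := by rw [← hxy]; simp
    rwa [this]

/-- A permutation group on `Ω` is a relation group if it is the invariance group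
of some unordered relation on `Ω`. -/
def IsRelationGroup {Ω : Type*} [Fintype Ω] [DecidableEq Ω]
    (G : Subgroup (Equiv.Perm Ω)) : Prop :=
  ∃ R : Set (Finset Ω), G = invGroup R

/-- `w` is a regular set for `G`: only the identity of `G` stabilizes `w` setwise. -/
def IsRegularSet {Ω : Type*} [DecidableEq Ω] (G : Subgroup (Equiv.Perm Ω))
    (w : Finset Ω) : Prop :=
  ∀ g ∈ G, g • w = w → g = 1

/-- The arity of a relation: the set of cardinalities of its members. -/
def arity {Ω : Type*} (R : Set (Finset Ω)) : Set ℕ := {n | ∃ x ∈ R, x.card = n}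

/-- `G` is orbit closed: every permutation mapping each finite subset into its
`G`-orbit already lies in `G`. -/
def IsOrbitClosed {Ω : Type*} [DecidableEq Ω] (G : Subgroup (Equiv.Perm Ω)) : Prop :=
  ∀ g : Equiv.Perm Ω, (∀ x : Finset Ω, ∃ h ∈ G, g • x = h • x) → g ∈ G

/-- `G` is set-transitive: transitive on `k`-element subsets for every `k`. -/
def IsSetTransitive {Ω : Type*} [DecidableEq Ω] (G : Subgroup (Equiv.Perm Ω)) : Prop :=
  ∀ x y : Finset Ω, x.card = y.card → ∃ g ∈ G, g • x = y

/-- A permutation group is primitive if it is transitive and every block of the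
action is trivial (a subsingleton or the whole set). -/
def IsPrimitivePermGroup {Ω : Type*} (G : Subgroup (Equiv.Perm Ω)) : Prop :=
  MulAction.IsPretransitive ↥G Ω ∧
    ∀ B : Set Ω, MulAction.IsBlock ↥G B → B.Subsingleton ∨ B = Set.univ

/-- The imprimitive wreath product `K ≀ L` as a subgroup of `Sym (Δ × Γ)`:
all permutations `g` of `Δ × Γ` of the form `g (δ, i) = (k_i δ, σ i)`
with `σ ∈ L` and each `k_i ∈ K`. -/
def wreathProduct {Δ Γ : Type*} (K : Subgroup (Equiv.Perm Δ)) (L : Subgroup (Equiv.Perm Γ)) :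
    Subgroup (Equiv.Perm (Δ × Γ)) where
  carrier := {g | ∃ σ ∈ L, ∃ k : Γ → Equiv.Perm Δ, (∀ i, k i ∈ K) ∧
      ∀ p : Δ × Γ, g p = (k p.2 p.1, σ p.2)}
  one_mem' := ⟨1, L.one_mem, fun _ => 1, fun _ => K.one_mem, fun _ => rfl⟩
  mul_mem' := by
    rintro a b ⟨σa, hσa, ka, hka, ha⟩ ⟨σb, hσb, kb, hkb, hb⟩
    refine ⟨σa * σb, L.mul_mem hσa hσb, fun i => ka (σb i) * kb i,
      fun i => K.mul_mem (hka _) (hkb _), fun p => ?_⟩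
    have : (a * b) p = a (b p) := rfl
    rw [this, hb p, ha]
    rfl
  inv_mem' := by
    rintro g ⟨σ, hσ, k, hk, hg⟩
    refine ⟨σ⁻¹, L.inv_mem hσ, fun i => (k (σ⁻¹ i))⁻¹, fun i => K.inv_mem (hk _), fun p => ?_⟩
    apply g.injective
    rw [show g (g⁻¹ p) = p from g.apply_symm_apply p, hg]
    simp

/-- If `K` has at least `|Γ|` regular sets on `Δ` of pairwise distinct
cardinalities and `L` is transitive on `Γ`, then `K ≀ L` has a regular set on
`Δ × Γ`. -/
theorem wreathProduct_regular_set_of_many_regular_sets {Δ Γ : Type*}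
    [Fintype Δ] [DecidableEq Δ] [Fintype Γ] [DecidableEq Γ]
    (K : Subgroup (Equiv.Perm Δ)) (L : Subgroup (Equiv.Perm Γ))
    (hLtrans : MulAction.IsPretransitive ↥L Γ)
    (hreg : ∃ w : Γ → Finset Δ, (∀ i, IsRegularSet K (w i)) ∧
      Function.Injective fun i => (w i).card) :
    ∃ w : Finset (Δ × Γ), IsRegularSet (wreathProduct K L) w := by
  classical
  obtain ⟨w, hwreg, hwcard⟩ := hreg
  set W : Finset (Δ × Γ) := Finset.univ.filter (fun p => p.1 ∈ w p.2) with hW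
  refine ⟨W, ?_⟩
  rintro g ⟨σ, hσ, k, hk, hgp⟩ hgw
  have hmem : ∀ p : Δ × Γ, p ∈ W ↔ p.1 ∈ w p.2 := by
    intro p; simp [hW]
  have key : ∀ i : Γ, (k i) • (w i) = w (σ i) := by
    intro i
    ext δ
    rw [Finset.mem_smul_finset]
    constructor
    · rintro ⟨δ', hδ', rfl⟩
      have h1 : ((δ', i) : Δ × Γ) ∈ W := (hmem _).2 hδ'
      have h2 : g • ((δ', i) : Δ × Γ) ∈ W := by
        rw [← hgw]; exact Finset.smul_mem_smul_finset h1
      have h3 : g • ((δ', i) : Δ × Γ) = (k i δ', σ i) := hgp _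
      rw [h3, hmem] at h2
      exact h2
    · intro hδ
      have h2 : ((δ, σ i) : Δ × Γ) ∈ W := (hmem _).2 hδ
      rw [← hgw, Finset.mem_smul_finset] at h2
      obtain ⟨⟨δ', j⟩, hq, hgq⟩ := h2
      have h3 : g • ((δ', j) : Δ × Γ) = (k j δ', σ j) := hgp _
      rw [h3, Prod.mk.injEq] at hgq
      obtain ⟨hfst, hsnd⟩ := hgq
      have hji : j = i := σ.injective hsnd
      subst hji
      exact ⟨δ', (hmem _).1 hq, hfst⟩
  have hσ1 : ∀ i : Γ, σ i = i := by
    intro i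
    apply hwcard
    have := congrArg Finset.card (key i)
    rw [Finset.card_smul_finset] at this
    exact this.symm
  have hk1 : ∀ i : Γ, k i = 1 := by
    intro i
    apply hwreg i _ (hk i)
    rw [key i, hσ1 i]
  apply Equiv.ext
  intro p
  have := hgp p
  rw [hσ1, hk1] at this
  simpa using this
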